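/- Let A be a commutative ring, B an A-algebra of finite type with generators x₁,...,xₙ, and suppose B is free as an A-module with a basis given by a 'good' family of monomials (x₁^{i₁}···xₙ^{iₙ})_{(i₁,...,iₙ)∈I'} (downward closed in exponents, with each excluded monomial expressible as an A-combination of basis monomials of smaller lexicographic index). Then B is of finite presentation as an A-algebra: B ≅ A[X₁,...,Xₙ]/I where I is generated by one relation for each corner of the complement of I'. -/

import Mathlib

open MvPolynomial

theorem algebra_finitePresentation_of_good_monomial_basis (A : Type*) [CommRing A]
    (B : Type*) [CommRing B] [Algebra A B]
    (n : ℕ) (x : Fin n → B) (hx : Algebra.adjoin A (Set.range x) = ⊤)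
    (I' : Set (Fin n → ℕ))
    -- the complement of I' is upward closed, i.e. I' is downward closed
    (hdown : ∀ i k : Fin n → ℕ, i ∉ I' → i ≤ k → k ∉ I')
    -- every monomial is an A-linear combination of basis monomials of
    -- smaller-or-equal lexicographic index
    (hspan : ∀ i : Fin n → ℕ,
      (∏ j, x j ^ i j) ∈ Submodule.span A
        ((fun i' : Fin n → ℕ => ∏ j, x j ^ i' j) ''
          {i' ∈ I' | (toLex i' : Lex (Fin n → ℕ)) ≤ toLex i}))
    -- the monomials indexed by I' are A-linearly independent (so they form a basis of B)
    (hind : LinearIndependent A (fun i : I' => ∏ j, x j ^ (i : Fin n → ℕ) j)) :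
    Algebra.FinitePresentation A B := by
  classical
  haveI : WellFoundedLT (Fin n) := inferInstance
  have hsymmcoe : ∀ g : Fin n → ℕ, ((Finsupp.equivFunOnFinite.symm g : Fin n →₀ ℕ) : Fin n → ℕ) = g :=
    fun _ => rfl
  have hsurj : Function.Surjective (aeval x : MvPolynomial (Fin n) A →ₐ[A] B) := by
    rw [← AlgHom.range_eq_top, ← Algebra.adjoin_range_eq_range_aeval, hx]
  -- evaluation of a monomial
  have haevalmon : ∀ (d : Fin n →₀ ℕ) (a : A),
      aeval x (monomial d a) = a • ∏ j, x j ^ d j := by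
    intro d a
    rw [aeval_monomial, Algebra.smul_def]
    congr 1
    exact Finsupp.prod_pow d x
  -- expansion of aeval as a sum over the support
  have haeval_eq : ∀ p : MvPolynomial (Fin n) A,
      aeval x p = ∑ d ∈ p.support, coeff d p • ∏ j, x j ^ d j := by
    intro p
    conv_lhs => rw [← support_sum_monomial_coeff p]
    rw [map_sum]
    exact Finset.sum_congr rfl fun d _ => haevalmon d _
  -- reduction polynomials for exponents outside I'
  have haux : ∀ i : Fin n → ℕ, i ∉ I' → ∃ r : MvPolynomial (Fin n) A,
      (∀ d ∈ r.support, (d : Fin n → ℕ) ∈ I' ∧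
        toLex (d : Fin n → ℕ) < toLex i) ∧ aeval x r = ∏ j, x j ^ i j := by
    intro i hi
    obtain ⟨c, hc, hc2⟩ := (Finsupp.mem_span_image_iff_linearCombination A).1 (hspan i)
    rw [Finsupp.mem_supported] at hc
    refine ⟨c.sum fun i' a => monomial (Finsupp.equivFunOnFinite.symm i') a, ?_, ?_⟩
    · intro d hd
      obtain ⟨i', hi', hd'⟩ := Finset.mem_biUnion.1 (MvPolynomial.support_sum (by rw [Finsupp.sum] at hd; exact hd))
      have hdi : d = Finsupp.equivFunOnFinite.symm i' :=
        Finset.mem_singleton.1 (support_monomial_subset hd')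
      obtain ⟨hI, hle⟩ := hc (Finset.mem_coe.2 hi')
      have hcd : (d : Fin n → ℕ) = i' := by rw [hdi]; exact hsymmcoe i'
      refine ⟨hcd ▸ hI, ?_⟩
      rw [hcd]
      rcases lt_or_eq_of_le hle with h' | h'
      · exact h'
      · exact absurd (toLex.injective h' ▸ hI) hi
    · rw [Finsupp.sum, map_sum, ← hc2, Finsupp.linearCombination_apply, Finsupp.sum]
      exact Finset.sum_congr rfl fun i' _ => haevalmon _ _
  -- minimal elements outside I'
  set M : Set (Fin n → ℕ) := {c | c ∉ I' ∧ ∀ c', c' ∉ I' → c' ≤ c → c' = c} with hMdef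
  have hanti : IsAntichain (· ≤ ·) M := fun a ha b hb hne hab => hne (hb.2 a ha.1 hab)
  have hpwo : M.IsPWO := Set.isPWO_of_wellQuasiOrderedLE M
  have hMfin : M.Finite := hanti.finite_of_partiallyWellOrderedOn hpwo
  -- well-foundedness of the lexicographic order
  have hupwo : (Set.univ : Set (Lex (Fin n → ℕ))).IsPWO := by
    intro g
    obtain ⟨a, b, hab, hle⟩ := Set.isPWO_of_wellQuasiOrderedLE (Set.univ : Set (Fin n → ℕ))
      (fun k => ⟨ofLex (g k).1, trivial⟩)
    exact ⟨a, b, hab, Pi.toLex_monotone hle⟩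
  have hlexwf : WellFounded ((· < ·) : Lex (Fin n → ℕ) → Lex (Fin n → ℕ) → Prop) := by
    rw [RelEmbedding.wellFounded_iff_isEmpty]
    constructor
    intro f
    obtain ⟨m, k, hmk, hle⟩ := hupwo (fun j => ⟨f j, trivial⟩)
    exact absurd hle (not_le_of_gt (f.map_rel_iff.2 hmk))
  have hprodwf : WellFounded ((· < ·) : (Fin n → ℕ) → (Fin n → ℕ) → Prop) :=
    Subrelation.wf (fun h => Pi.toLex_strictMono h) (InvImage.wf toLex hlexwf)
  have hdom : ∀ i : Fin n → ℕ, i ∉ I' → ∃ c ∈ M, c ≤ i := by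
    intro i hi
    obtain ⟨c, ⟨hc1, hc2⟩, hmin⟩ := hprodwf.has_min {c | c ∉ I' ∧ c ≤ i} ⟨i, hi, le_rfl⟩
    exact ⟨c, ⟨hc1, fun c' hc' hle =>
      (lt_or_eq_of_le hle).resolve_left fun hlt => hmin c' ⟨hc', hle.trans hc2⟩ hlt⟩, hc2⟩
  choose r hr1 hr2 using haux
  haveI : Finite M := hMfin.to_subtype
  set S : Set (MvPolynomial (Fin n) A) :=
    Set.range (fun c : M => monomial (Finsupp.equivFunOnFinite.symm (c : Fin n → ℕ)) (1 : A)
      - r (c : Fin n → ℕ) c.2.1) with hSdef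
  set J : Ideal (MvPolynomial (Fin n) A) := Ideal.span S with hJdef
  have hJfg : J.FG := Submodule.fg_span (Set.finite_range _)
  have hgen0 : ∀ s ∈ S, aeval x s = 0 := by
    rintro s ⟨c, rfl⟩
    rw [map_sub, haevalmon, hr2, one_smul]
    rw [show (∏ j, x j ^ (Finsupp.equivFunOnFinite.symm (c : Fin n → ℕ)) j)
        = ∏ j, x j ^ (c : Fin n → ℕ) j from Finset.prod_congr rfl fun j _ => by
          rw [congrFun (hsymmcoe (c : Fin n → ℕ)) j]]
    exact sub_self _
  have hJker : ∀ p ∈ J, aeval x p = 0 := by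
    intro p hp
    have hle : J ≤ RingHom.ker (aeval x : MvPolynomial (Fin n) A →ₐ[A] B).toRingHom :=
      Ideal.span_le.2 fun s hs => hgen0 s hs
    exact hle hp
  haveI : WellFoundedLT (Lex (Fin n → ℕ)) := ⟨hlexwf⟩
  -- key reduction lemma
  have key : ∀ ℓ : WithTop (Lex (Fin n → ℕ)), ∀ p : MvPolynomial (Fin n) A,
      (∀ d : Fin n →₀ ℕ, d ∈ p.support → (d : Fin n → ℕ) ∉ I' → (WithTop.some (toLex (d : Fin n → ℕ))) < ℓ) →
      aeval x p = 0 → p ∈ J := by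
    intro ℓ
    refine WellFounded.induction (wellFounded_lt (α := WithTop (Lex (Fin n → ℕ))))
      (C := fun ℓ => ∀ p : MvPolynomial (Fin n) A,
        (∀ d : Fin n →₀ ℕ, d ∈ p.support → (d : Fin n → ℕ) ∉ I' →
          (WithTop.some (toLex (d : Fin n → ℕ))) < ℓ) →
        aeval x p = 0 → p ∈ J) ℓ ?_
    clear ℓ
    intro ℓ ih p hbound h0
    rcases (p.support.filter fun d : Fin n →₀ ℕ => (d : Fin n → ℕ) ∉ I').eq_empty_or_nonempty with hemp | hne
    · -- all monomials of p lie in I' : p = 0 by linear independence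
      rw [Finset.filter_eq_empty_iff] at hemp
      have hps : ∀ d ∈ p.support, (d : Fin n → ℕ) ∈ I' := by
        intro d hd
        by_contra hbad
        exact hemp hd hbad
      have hcoeff : ∀ d ∈ p.support, coeff d p = 0 := by
        intro d hd
        have hli := linearIndependent_iff'.1 hind
        set e : {d // d ∈ p.support} → I' :=
          fun d => (⟨(d.1 : Fin n → ℕ), hps d.1 d.2⟩ : I') with he
        have hinj : Set.InjOn e p.support.attach := by
          intro u _ v _ huv
          have : (u.1 : Fin n → ℕ) = (v.1 : Fin n → ℕ) := congrArg Subtype.val huv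
          exact Subtype.ext (DFunLike.coe_injective this)
        set s : Finset I' := p.support.attach.image e with hs
        set g : I' → A := fun i => coeff (Finsupp.equivFunOnFinite.symm (i : Fin n → ℕ)) p with hg
        have hsum : ∑ i ∈ s, g i • (∏ j, x j ^ (i : Fin n → ℕ) j) = 0 := by
          rw [hs, Finset.sum_image fun u hu v hv h => hinj hu hv h]
          rw [show ∑ u ∈ p.support.attach, g (e u) • (∏ j, x j ^ ((e u : Fin n → ℕ)) j)
              = ∑ u ∈ p.support.attach, coeff u.1 p • (∏ j, x j ^ u.1 j) from
            Finset.sum_congr rfl fun u _ => by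
              simp only [he, hg, Finsupp.equivFunOnFinite_symm_coe]]
          rw [Finset.sum_attach p.support fun d => coeff d p • (∏ j, x j ^ d j)]
          rw [← haeval_eq, h0]
        have := hli s g hsum ⟨(d : Fin n → ℕ), hps d hd⟩ (by
          rw [hs, Finset.mem_image]
          exact ⟨⟨d, hd⟩, Finset.mem_attach _ _, rfl⟩)
        rw [hg] at this
        simpa [Finsupp.equivFunOnFinite_symm_coe] using this
      have hp0 : p = 0 := by
        ext m
        rw [coeff_zero]
        by_cases hm : m ∈ p.support
        · exact hcoeff m hm
        · exact notMem_support_iff.1 hm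
      exact hp0 ▸ J.zero_mem
    · -- reduce the largest bad monomial
      set t : Finset (Lex (Fin n → ℕ)) :=
        (p.support.filter fun d : Fin n →₀ ℕ => (d : Fin n → ℕ) ∉ I').image
          (fun d : Fin n →₀ ℕ => toLex (d : Fin n → ℕ)) with ht
      have htne : t.Nonempty := hne.image _
      obtain ⟨d₀, hd₀f, hd₀max⟩ := Finset.mem_image.1 (t.max'_mem htne)
      rw [Finset.mem_filter] at hd₀f
      obtain ⟨hd₀s, hd₀bad⟩ := hd₀f
      obtain ⟨c, hcM, hci⟩ := hdom (d₀ : Fin n → ℕ) hd₀bad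
      have hℓi : (WithTop.some (toLex ((d₀ : Fin n → ℕ)))) < ℓ :=
        hbound d₀ hd₀s hd₀bad
      set dc : Fin n →₀ ℕ := Finsupp.equivFunOnFinite.symm c with hdc
      have hdccoe : (dc : Fin n → ℕ) = c := hsymmcoe c
      have hdcd₀ : dc ≤ d₀ := (Finsupp.le_iff dc d₀).2 fun j _ => by
        rw [show dc j = c j from congrFun hdccoe j]
        exact hci j
      have hsubadd : (d₀ - dc) + dc = d₀ := tsub_add_cancel_of_le hdcd₀
      set gc : MvPolynomial (Fin n) A := monomial dc (1 : A) - r c hcM.1 with hgcdef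
      have hgcS : gc ∈ S := ⟨⟨c, hcM⟩, rfl⟩
      have hgcJ : gc ∈ J := Ideal.subset_span hgcS
      set a : A := coeff d₀ p with ha
      set p' : MvPolynomial (Fin n) A := p - monomial (d₀ - dc) a * gc with hp'
      have hqg : monomial (d₀ - dc) a * monomial dc (1 : A) = monomial d₀ a := by
        rw [monomial_mul, hsubadd, mul_one]
      have hp'eq : p' = (p - monomial d₀ a) + monomial (d₀ - dc) a * r c hcM.1 := by
        rw [hp', hgcdef, mul_sub, hqg]
        ring
      have hbound' : ∀ d : Fin n →₀ ℕ, d ∈ p'.support → (d : Fin n → ℕ) ∉ I' →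
          toLex (d : Fin n → ℕ) < toLex ((d₀ : Fin n → ℕ)) := by
        intro d hd hdbad
        rw [hp'eq] at hd
        rcases Finset.mem_union.1 (support_add hd) with hd1 | hd2
        · have hdne : d ≠ d₀ := fun h => mem_support_iff.1 hd1 (by
            rw [h, coeff_sub, coeff_monomial, if_pos rfl, ha, sub_self])
          have hdp : d ∈ p.support := by
            rw [mem_support_iff] at hd1 ⊢
            intro h
            apply hd1
            rw [coeff_sub, h, coeff_monomial, if_neg fun he => hdne he.symm, sub_zero]
          have hlemax : toLex (d : Fin n → ℕ) ≤ toLex ((d₀ : Fin n → ℕ)) := by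
            rw [hd₀max]
            exact Finset.le_max' t _
              (Finset.mem_image_of_mem _ (Finset.mem_filter.2 ⟨hdp, hdbad⟩))
          refine lt_of_le_of_ne hlemax fun he => hdne (DFunLike.coe_injective (toLex.injective he))
        · obtain ⟨u, hu, v, hv, rfl⟩ := Finset.mem_add.1 (support_mul _ _ hd2)
          have hu' : u = d₀ - dc := Finset.mem_singleton.1 (support_monomial_subset hu)
          subst hu'
          obtain ⟨hvI, hvlt⟩ := hr1 c hcM.1 v hv
          have hcoe : (((d₀ - dc) + v : Fin n →₀ ℕ) : Fin n → ℕ)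
              = ((d₀ : Fin n → ℕ) - c) + (v : Fin n → ℕ) := by
            funext j
            simp only [Finsupp.coe_add, Finsupp.coe_tsub, Pi.add_apply, Pi.sub_apply]
            rw [show dc j = c j from congrFun hdccoe j]
          rw [hcoe]
          have hic : ((d₀ : Fin n → ℕ) - c) + c = (d₀ : Fin n → ℕ) := by
            funext j
            exact Nat.sub_add_cancel (hci j)
          calc toLex (((d₀ : Fin n → ℕ) - c) + (v : Fin n → ℕ))
              < toLex (((d₀ : Fin n → ℕ) - c) + c) := by
                obtain ⟨k, hk, hlt⟩ := hvlt
                exact ⟨k, fun j hj => congrArg (((d₀ : Fin n → ℕ) - c) j + ·) (hk j hj),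
                  Nat.add_lt_add_left hlt _⟩
            _ = toLex ((d₀ : Fin n → ℕ)) := by rw [hic]
      have h0' : aeval x p' = 0 := by
        rw [hp', map_sub, map_mul, hgen0 gc hgcS, mul_zero, sub_zero, h0]
      have hp'J : p' ∈ J := by
        refine ih (WithTop.some (toLex ((d₀ : Fin n → ℕ)))) hℓi p' ?_ h0'
        intro d hd hdbad
        exact WithTop.coe_lt_coe.2 (hbound' d hd hdbad)
      have hpdecomp : p = p' + monomial (d₀ - dc) a * gc := by
        rw [hp']; ring
      rw [hpdecomp]
      exact J.add_mem hp'J (Ideal.mul_mem_left _ _ hgcJ)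
  have hker : RingHom.ker (aeval x : MvPolynomial (Fin n) A →ₐ[A] B).toRingHom = J := by
    apply le_antisymm
    · intro p hp
      exact key ⊤ p (fun d _ _ => WithTop.coe_lt_top _) hp
    · intro p hp
      exact hJker p hp
  exact Algebra.FinitePresentation.of_surjective hsurj (hker ▸ hJfg)
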